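/- Let d ≥ 1 and let n_1, …, n_d, m be positive integers with n_i ≤ m for each i. Then there exists a nonempty Zariski-open subset U of ∏_{i=1}^d ℂ^{m×n_i} × ∏_{i=1}^d ℂ^{n_i} such that for every tuple (Y_1, …, Y_d, p_1, …, p_d) ∈ U and every nonempty F ⊆ [m], the rank of the submatrix, with rows indexed by F, of the block matrix ( (∏_{i≠1} Diag(Y_i p_i)) Y_1 | ⋯ | (∏_{i≠d} Diag(Y_i p_i)) Y_d ) equals min{|F|, n_1 + ⋯ + n_d − (d−1)}. (Equivalently, the algebraic matroid of the Hadamard product of generic linear spaces of dimensions n_1, …, n_d in ℂ^m is the uniform matroid on [m] of rank min{m, n_1 + ⋯ + n_d − (d−1)}.) -/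

import Mathlib

open MvPolynomial

/-- The rank of the submatrix of `Y` consisting of the rows indexed by `F`. -/
noncomputable def rowsRank {m : ℕ} {o : Type*} [Fintype o]
    (Y : Matrix (Fin m) o ℂ) (F : Finset (Fin m)) : ℕ :=
  (Y.submatrix (fun x : {a // a ∈ F} => (x : Fin m)) id).rank


lemma genVdm_ne_zero {m : ℕ} {ι : Type*} [Fintype ι] [DecidableEq ι]
    {f : ι → Fin m} (hf : Function.Injective f) {e : ι → ℕ} (he : Function.Injective e) :
    (Matrix.of fun j c : ι => (MvPolynomial.X (f j) : MvPolynomial (Fin m) ℂ) ^ e c).det ≠ 0 := by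
  classical
  set w : Equiv.Perm ι → (Fin m →₀ ℕ) :=
    fun σ => ∑ i : ι, Finsupp.single (f (σ i)) (e i) with hw
  have hwapp : ∀ σ j, w σ (f j) = e (σ.symm j) := by
    intro σ j
    rw [hw]
    simp only [Finsupp.finset_sum_apply]
    rw [Finset.sum_eq_single (σ.symm j)]
    · simp
    · intro b _ hb
      rw [Finsupp.single_apply, if_neg]
      intro hfb
      apply hb
      have h5 := hf hfb
      rw [← h5, Equiv.symm_apply_apply]
    · simp
  have hwinj : Function.Injective w := by
    intro σ τ h
    have h2 : ∀ j, σ.symm j = τ.symm j := fun j => he (by rw [← hwapp, ← hwapp, h])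
    have h3 : σ.symm = τ.symm := Equiv.ext h2
    calc σ = σ.symm.symm := by simp
    _ = τ.symm.symm := by rw [h3]
    _ = τ := by simp
  have hdet : (Matrix.of fun j c : ι => (MvPolynomial.X (f j) : MvPolynomial (Fin m) ℂ) ^ e c).det
      = ∑ σ : Equiv.Perm ι, (Equiv.Perm.sign σ : ℤ) • MvPolynomial.monomial (w σ) (1 : ℂ) := by
    rw [Matrix.det_apply]
    refine Finset.sum_congr rfl fun σ _ => ?_
    congr 1
    rw [hw]
    simp only [Matrix.of_apply]
    rw [monomial_sum_index]
    simp [X_pow_eq_monomial]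
  intro h
  have h1 : MvPolynomial.coeff (w 1)
      ((Matrix.of fun j c : ι => (MvPolynomial.X (f j) : MvPolynomial (Fin m) ℂ) ^ e c).det)
      = 1 := by
    rw [hdet, MvPolynomial.coeff_sum, Finset.sum_eq_single (1 : Equiv.Perm ι)]
    · simp [coeff_monomial]
    · intro σ _ hσ
      have hne : w σ ≠ w 1 := fun hh => hσ (hwinj hh)
      rw [MvPolynomial.coeff_smul, coeff_monomial, if_neg hne, smul_zero]
    · simp
  rw [h] at h1
  simp at h1


lemma rank_submatrix_le'' {ι κ μ ν : Type*} [Fintype ι] [Fintype κ] [Fintype μ] [Fintype ν]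
    [DecidableEq ι] [DecidableEq κ]
    (A : Matrix ι κ ℂ) (f : μ → ι) (g : ν → κ) :
    (A.submatrix f g).rank ≤ A.rank := by
  classical
  let P : Matrix μ ι ℂ := Matrix.of fun r j => if f r = j then 1 else 0
  let Q : Matrix κ ν ℂ := Matrix.of fun j c => if j = g c then 1 else 0
  have hPQ : A.submatrix f g = P * A * Q := by
    ext r c
    simp only [P, Q, Matrix.submatrix_apply, Matrix.mul_apply, Matrix.of_apply, ite_mul, mul_ite,
      one_mul, zero_mul, mul_one, mul_zero, Finset.sum_ite_eq, Finset.sum_ite_eq',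
      Finset.mem_univ, if_true]
  rw [hPQ]
  exact le_trans (Matrix.rank_mul_le_left _ _) (Matrix.rank_mul_le_right _ _)

lemma card_le_rank_of_det_ne_zero {ι κ μ : Type*} [Fintype ι] [Fintype κ] [Fintype μ]
    [DecidableEq ι] [DecidableEq κ] [DecidableEq μ]
    (A : Matrix ι κ ℂ) (f : μ → ι) (g : μ → κ)
    (h : (A.submatrix f g).det ≠ 0) : Fintype.card μ ≤ A.rank := by
  have hu : IsUnit (A.submatrix f g) :=
    (Matrix.isUnit_iff_isUnit_det _).mpr (isUnit_iff_ne_zero.mpr h)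
  have h2 := Matrix.rank_of_isUnit _ hu
  rw [← h2]
  exact rank_submatrix_le'' A f g


lemma rank_jac_le {d m : ℕ} (hd : 0 < d) {n : Fin d → ℕ} (hn : ∀ i, 0 < n i)
    (Y : ∀ i : Fin d, Matrix (Fin m) (Fin (n i)) ℂ) (p : ∀ i : Fin d, Fin (n i) → ℂ)
    (hp : ∀ i, p i ⟨0, hn i⟩ ≠ 0) :
    (Matrix.of fun (r : Fin m) (c : Σ i : Fin d, Fin (n i)) =>
        (∏ k ∈ Finset.univ.erase c.1, (Y k).mulVec (p k) r) * Y c.1 r c.2).rank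
      ≤ ∑ i, n i - (d - 1) := by
  classical
  set J : Matrix (Fin m) (Σ i : Fin d, Fin (n i)) ℂ :=
    Matrix.of fun (r : Fin m) (c : Σ i : Fin d, Fin (n i)) =>
        (∏ k ∈ Finset.univ.erase c.1, (Y k).mulVec (p k) r) * Y c.1 r c.2 with hJ
  -- the linear map t ↦ (c ↦ t c.1 * p c.1 c.2)
  let L : (Fin d → ℂ) →ₗ[ℂ] ((Σ i : Fin d, Fin (n i)) → ℂ) :=
    { toFun := fun t c => t c.1 * p c.1 c.2
      map_add' := by intro a b; funext c; simp [add_mul]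
      map_smul' := by intro a b; funext c; simp [mul_assoc] }
  have hLinj : Function.Injective L := by
    rw [injective_iff_map_eq_zero]
    intro t ht
    funext i
    have := congrFun ht ⟨i, ⟨0, hn i⟩⟩
    simp only [L, LinearMap.coe_mk, AddHom.coe_mk] at this
    rcases mul_eq_zero.mp this with h | h
    · exact h
    · exact absurd h (hp i)
  -- the sum functional
  let S : (Fin d → ℂ) →ₗ[ℂ] ℂ :=
    { toFun := fun t => ∑ i, t i
      map_add' := by intro a b; simp [Finset.sum_add_distrib]
      map_smul' := by intro a b; simp [Finset.mul_sum] }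
  have hker : Submodule.map L (LinearMap.ker S) ≤ LinearMap.ker J.mulVecLin := by
    rintro _ ⟨t, ht, rfl⟩
    simp only [LinearMap.mem_ker] at ht ⊢
    have hS : ∑ i, t i = 0 := ht
    funext r
    show J.mulVec (L t) r = 0
    simp only [Matrix.mulVec, dotProduct]
    rw [← Finset.univ_sigma_univ, Finset.sum_sigma]
    have hterm : ∀ i : Fin d, ∑ a : Fin (n i), J r ⟨i, a⟩ * L t ⟨i, a⟩
        = t i * ∏ k, (Y k).mulVec (p k) r := by
      intro i
      have : ∀ a : Fin (n i), J r ⟨i, a⟩ * L t ⟨i, a⟩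
          = t i * ((∏ k ∈ Finset.univ.erase i, (Y k).mulVec (p k) r) * (Y i r a * p i a)) := by
        intro a
        simp only [hJ, Matrix.of_apply, L, LinearMap.coe_mk, AddHom.coe_mk]
        ring
      rw [Finset.sum_congr rfl fun a _ => this a, ← Finset.mul_sum, ← Finset.mul_sum]
      congr 1
      rw [← Finset.prod_erase_mul Finset.univ _ (Finset.mem_univ i)]
      rfl
    rw [Finset.sum_congr rfl fun i _ => hterm i, ← Finset.sum_mul, hS, zero_mul]
  have hrn := LinearMap.finrank_range_add_finrank_ker J.mulVecLin
  have hcard : Module.finrank ℂ ((Σ i : Fin d, Fin (n i)) → ℂ) = ∑ i, n i := by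
    simp [Module.finrank_pi, Fintype.card_sigma]
  have hkerS : Module.finrank ℂ (LinearMap.ker S) = d - 1 := by
    have hrnS := LinearMap.finrank_range_add_finrank_ker S
    have hSsurj : Function.Surjective S := by
      intro c
      refine ⟨fun j => if j = ⟨0, hd⟩ then c else 0, ?_⟩
      simp [S, Finset.sum_ite_eq']
    have hrange : LinearMap.range S = ⊤ := LinearMap.range_eq_top.mpr hSsurj
    rw [hrange] at hrnS
    simp only [finrank_top, Module.finrank_self, Module.finrank_pi] at hrnS
    simp only [Fintype.card_fin] at hrnS
    omega
  have hle : d - 1 ≤ Module.finrank ℂ (LinearMap.ker J.mulVecLin) := by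
    have h1 : Module.finrank ℂ (Submodule.map L (LinearMap.ker S))
        = Module.finrank ℂ (LinearMap.ker S) := by
      apply LinearEquiv.finrank_eq
      exact (Submodule.equivMapOfInjective L hLinj _).symm
    calc d - 1 = Module.finrank ℂ (Submodule.map L (LinearMap.ker S)) := by rw [h1, hkerS]
    _ ≤ Module.finrank ℂ (LinearMap.ker J.mulVecLin) := Submodule.finrank_mono hker
  have : J.rank = Module.finrank ℂ (LinearMap.range J.mulVecLin) := rfl
  omega

section AuxComb
variable {d : ℕ} {n : Fin d → ℕ}

/-- Exponent pattern used for the witness substitution. -/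
def expF (n : Fin d → ℕ) : (Σ i : Fin d, Fin (n i)) → ℕ := fun c =>
  if (c.2 : ℕ) = 0 then 0 else (∑ k ∈ Finset.Iio c.1, n k) + c.2

/-- Columns on which the exponent pattern is injective. -/
def Tgen (n : Fin d → ℕ) : Finset (Σ i : Fin d, Fin (n i)) :=
  Finset.univ.filter fun c => (c.2 : ℕ) ≠ 0 ∨ (c.1 : ℕ) = 0

lemma sum_Iio_mono {i i' : Fin d} (h : i < i') :
    (∑ k ∈ Finset.Iio i, n k) + n i ≤ ∑ k ∈ Finset.Iio i', n k := by
  have hsub : insert i (Finset.Iio i) ⊆ Finset.Iio i' := by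
    intro x hx
    rcases Finset.mem_insert.mp hx with rfl | hx
    · exact Finset.mem_Iio.mpr h
    · exact Finset.mem_Iio.mpr (lt_trans (Finset.mem_Iio.mp hx) h)
  calc (∑ k ∈ Finset.Iio i, n k) + n i = ∑ k ∈ insert i (Finset.Iio i), n k := by
        rw [Finset.sum_insert (by simp), add_comm]
  _ ≤ ∑ k ∈ Finset.Iio i', n k := Finset.sum_le_sum_of_subset hsub

lemma expF_injOn : ∀ c ∈ Tgen n, ∀ c' ∈ Tgen n, expF n c = expF n c' → c = c' := by
  rintro ⟨i, a⟩ hc ⟨i', a'⟩ hc' h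
  simp only [Tgen, Finset.mem_filter, Finset.mem_univ, true_and] at hc hc'
  simp only [expF] at h
  by_cases h2 : (a : ℕ) = 0 <;> by_cases h2' : (a' : ℕ) = 0
  · have hi : (i : ℕ) = 0 := Or.resolve_left hc (by simpa using h2)
    have hi' : (i' : ℕ) = 0 := Or.resolve_left hc' (by simpa using h2')
    have : i = i' := Fin.ext (by rw [hi, hi'])
    subst this
    have : a = a' := Fin.ext (by rw [h2, h2'])
    rw [this]
  · exfalso
    rw [if_pos h2, if_neg h2'] at h
    omega
  · exfalso
    rw [if_neg h2, if_pos h2'] at h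
    omega
  · rw [if_neg h2, if_neg h2'] at h
    have hii : i = i' := by
      rcases lt_trichotomy i i' with hlt | heq | hlt
      · exfalso
        have h3 := sum_Iio_mono (n := n) hlt
        have h4 : (a : ℕ) < n i := a.2
        omega
      · exact heq
      · exfalso
        have h3 := sum_Iio_mono (n := n) hlt
        have h4 : (a' : ℕ) < n i' := a'.2
        omega
    subst hii
    have : a = a' := Fin.ext (by omega)
    rw [this]

lemma Tgen_card (hd : 0 < d) (hn : ∀ i, 0 < n i) :
    (Tgen n).card = ∑ i, n i - (d - 1) := by
  classical
  have hsplit := Finset.card_filter_add_card_filter_not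
    (s := (Finset.univ : Finset (Σ i : Fin d, Fin (n i))))
    (p := fun c => (c.2 : ℕ) ≠ 0 ∨ (c.1 : ℕ) = 0)
  have hcompl : (Finset.univ.filter fun c : Σ i : Fin d, Fin (n i) =>
      ¬((c.2 : ℕ) ≠ 0 ∨ (c.1 : ℕ) = 0)).card = d - 1 := by
    rw [Finset.card_bij' (i := fun c _ => c.1)
      (j := fun i (_ : i ∈ Finset.univ.erase ⟨0, hd⟩) => ⟨i, ⟨0, hn i⟩⟩)]
    · rw [Finset.card_erase_of_mem (Finset.mem_univ _), Finset.card_univ, Fintype.card_fin]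
    · rintro ⟨i, a⟩ hc
      simp only [Finset.mem_filter, Finset.mem_univ, true_and, not_or, not_ne_iff] at hc
      refine Finset.mem_erase.mpr ⟨?_, Finset.mem_univ _⟩
      intro hi
      have hi' : i = (⟨0, hd⟩ : Fin d) := hi
      exact hc.2 (by rw [hi'])
    · intro i hi
      simp only [Finset.mem_filter, Finset.mem_univ, true_and, not_or, not_ne_iff]
      intro h0
      exact (Finset.mem_erase.mp hi).1 (Fin.ext h0)
    · rintro ⟨i, a⟩ hc
      simp only [Finset.mem_filter, Finset.mem_univ, true_and, not_or, not_ne_iff] at hc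
      obtain ⟨h0, -⟩ := hc
      have h1 : (⟨0, hn i⟩ : Fin (n i)) = a := Fin.ext (by simp [h0])
      dsimp only
      rw [h1]
    · intro i hi
      rfl
  have hcard : (Finset.univ : Finset (Σ i : Fin d, Fin (n i))).card = ∑ i, n i := by
    rw [Finset.card_univ, Fintype.card_sigma]
    simp
  have hd1 : d - 1 ≤ ∑ i, n i := by
    calc d - 1 ≤ d := Nat.sub_le _ _
    _ = ∑ _i : Fin d, 1 := by simp
    _ ≤ ∑ i, n i := Finset.sum_le_sum fun i _ => hn i
  rw [Tgen]
  omega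

end AuxComb

theorem stmt15 {d m : ℕ} (hd : 0 < d) (hm : 0 < m) (n : Fin d → ℕ)
    (hn : ∀ i, 0 < n i) (hnm : ∀ i, n i ≤ m) :
    ∃ P : MvPolynomial ((Σ i : Fin d, Fin m × Fin (n i)) ⊕ (Σ i : Fin d, Fin (n i))) ℂ,
      P ≠ 0 ∧
      ∀ (Y : ∀ i : Fin d, Matrix (Fin m) (Fin (n i)) ℂ) (p : ∀ i : Fin d, Fin (n i) → ℂ),
        MvPolynomial.eval
            (Sum.elim (fun x => Y x.1 x.2.1 x.2.2) (fun x => p x.1 x.2)) P ≠ 0 →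
        ∀ F : Finset (Fin m), F.Nonempty →
          rowsRank (Matrix.of fun (r : Fin m) (c : Σ i : Fin d, Fin (n i)) =>
              (∏ k ∈ Finset.univ.erase c.1, (Y k).mulVec (p k) r) * Y c.1 r c.2) F =
            min F.card (∑ i, n i - (d - 1)) := by
  classical
  set V := (Σ i : Fin d, Fin m × Fin (n i)) ⊕ (Σ i : Fin d, Fin (n i)) with hV
  -- the generic Jacobian with polynomial entries
  set w : Fin d → Fin m → MvPolynomial V ℂ := fun k r =>
    ∑ a : Fin (n k), MvPolynomial.X (Sum.inl ⟨k, (r, a)⟩) * MvPolynomial.X (Sum.inr ⟨k, a⟩)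
    with hw
  set Jp : Matrix (Fin m) (Σ i : Fin d, Fin (n i)) (MvPolynomial V ℂ) :=
    Matrix.of fun r c => (∏ k ∈ Finset.univ.erase c.1, w k r)
      * MvPolynomial.X (Sum.inl ⟨c.1, (r, c.2)⟩) with hJp
  -- evaluation at a point
  have hev : ∀ (Y : ∀ i : Fin d, Matrix (Fin m) (Fin (n i)) ℂ) (p : ∀ i : Fin d, Fin (n i) → ℂ)
      (r : Fin m) (c : Σ i : Fin d, Fin (n i)),
      MvPolynomial.eval (Sum.elim (fun x => Y x.1 x.2.1 x.2.2) (fun x => p x.1 x.2)) (Jp r c)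
        = (∏ k ∈ Finset.univ.erase c.1, (Y k).mulVec (p k) r) * Y c.1 r c.2 := by
    intro Y p r c
    rw [hJp]
    simp only [Matrix.of_apply, map_mul, map_prod, map_sum, hw, MvPolynomial.eval_X,
      Sum.elim_inl, Sum.elim_inr]
    rfl
  -- the witness substitution
  set u : V → MvPolynomial (Fin m) ℂ := Sum.elim
    (fun x => MvPolynomial.X x.2.1 ^ expF n ⟨x.1, x.2.2⟩)
    (fun x => if (x.2 : ℕ) = 0 then 1 else 0) with hu
  set ψ : MvPolynomial V ℂ →+* MvPolynomial (Fin m) ℂ := (MvPolynomial.aeval u).toRingHom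
    with hψ
  have hψX : ∀ v : V, ψ (MvPolynomial.X v) = u v := by
    intro v; rw [hψ]; simp
  have hψw : ∀ (k : Fin d) (r : Fin m), ψ (w k r) = 1 := by
    intro k r
    rw [hw]
    dsimp only
    rw [map_sum]
    rw [Finset.sum_eq_single (⟨0, hn k⟩ : Fin (n k))]
    · rw [map_mul, hψX, hψX, hu]
      simp [expF]
    · intro b _ hb
      rw [map_mul, hψX, hψX, hu]
      have hb0 : ¬ ((b : ℕ) = 0) := fun h0 => hb (Fin.ext h0)
      simp [hb0]
    · simp
  have hψJ : ∀ (r : Fin m) (c : Σ i : Fin d, Fin (n i)),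
      ψ (Jp r c) = MvPolynomial.X r ^ expF n c := by
    intro r c
    rw [hJp]
    simp only [Matrix.of_apply, map_mul, map_prod]
    rw [Finset.prod_congr rfl (fun k _ => hψw k r), Finset.prod_const_one, one_mul, hψX, hu]
    simp only [Sum.elim_inl]
  -- helper: one good polynomial per F
  have helper : ∀ F : Finset (Fin m),
      ∃ Q : MvPolynomial V ℂ, Q ≠ 0 ∧
        ∀ (Y : ∀ i : Fin d, Matrix (Fin m) (Fin (n i)) ℂ) (p : ∀ i : Fin d, Fin (n i) → ℂ),
          MvPolynomial.eval (Sum.elim (fun x => Y x.1 x.2.1 x.2.2) (fun x => p x.1 x.2)) Q ≠ 0 →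
          min F.card (∑ i, n i - (d - 1)) ≤
            rowsRank (Matrix.of fun (r : Fin m) (c : Σ i : Fin d, Fin (n i)) =>
              (∏ k ∈ Finset.univ.erase c.1, (Y k).mulVec (p k) r) * Y c.1 r c.2) F := by
    intro F
    set s := min F.card (∑ i, n i - (d - 1)) with hs
    obtain ⟨F', hF'sub, hF'card⟩ := Finset.exists_subset_card_eq (min_le_left _ _ : s ≤ F.card)
    have hsT : s ≤ (Tgen n).card := by rw [Tgen_card hd hn]; exact min_le_right _ _
    obtain ⟨T', hT'sub, hT'card⟩ := Finset.exists_subset_card_eq hsT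
    have hcards : Fintype.card {a // a ∈ F'} = Fintype.card {c // c ∈ T'} := by
      simp only [Fintype.card_coe, hF'card, hT'card, hs]
    let eFT := Fintype.equivOfCardEq hcards
    let g : {a // a ∈ F'} → (Σ i : Fin d, Fin (n i)) := fun x => (eFT x : Σ i : Fin d, Fin (n i))
    have hginj : Function.Injective g := Subtype.val_injective.comp eFT.injective
    have hgT : ∀ x, g x ∈ Tgen n := fun x => hT'sub (eFT x).2
    have heinj : Function.Injective fun x : {a // a ∈ F'} => expF n (g x) := by
      intro x y hxy
      exact hginj (expF_injOn _ (hgT x) _ (hgT y) hxy)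
    refine ⟨(Jp.submatrix (fun x : {a // a ∈ F'} => (x : Fin m)) g).det, ?_, ?_⟩
    · intro h0
      have hψ0 : ψ ((Jp.submatrix (fun x : {a // a ∈ F'} => (x : Fin m)) g).det) = 0 := by
        rw [h0, map_zero]
      rw [RingHom.map_det, RingHom.mapMatrix_apply] at hψ0
      have hmat : (Jp.submatrix (fun x : {a // a ∈ F'} => (x : Fin m)) g).map ψ
          = Matrix.of fun j c : {a // a ∈ F'} =>
              (MvPolynomial.X ((j : Fin m)) : MvPolynomial (Fin m) ℂ)
                ^ (fun c : {a // a ∈ F'} => expF n (g c)) c := by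
        apply Matrix.ext
        intro j c
        simp only [Matrix.map_apply, Matrix.submatrix_apply, Matrix.of_apply]
        exact hψJ _ _
      rw [hmat] at hψ0
      exact genVdm_ne_zero Subtype.val_injective heinj hψ0
    · intro Y p hvQ
      set Jc : Matrix (Fin m) (Σ i : Fin d, Fin (n i)) ℂ :=
        Matrix.of fun (r : Fin m) (c : Σ i : Fin d, Fin (n i)) =>
          (∏ k ∈ Finset.univ.erase c.1, (Y k).mulVec (p k) r) * Y c.1 r c.2 with hJc
      have hmat2 : ((Jc.submatrix (fun x : {a // a ∈ F} => (x : Fin m)) id).submatrix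
            (fun x : {a // a ∈ F'} => (⟨(x : Fin m), hF'sub x.2⟩ : {a // a ∈ F})) g)
          = (Jp.submatrix (fun x : {a // a ∈ F'} => (x : Fin m)) g).map
              (MvPolynomial.eval (Sum.elim (fun x => Y x.1 x.2.1 x.2.2)
                (fun x => p x.1 x.2))) := by
        apply Matrix.ext
        intro x c
        simp only [Matrix.submatrix_apply, Matrix.map_apply, id_eq]
        rw [hev, hJc]
        rfl
      have hdet : (((Jc.submatrix (fun x : {a // a ∈ F} => (x : Fin m)) id).submatrix
            (fun x : {a // a ∈ F'} => (⟨(x : Fin m), hF'sub x.2⟩ : {a // a ∈ F})) g)).det ≠ 0 := by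
        rw [hmat2, ← RingHom.mapMatrix_apply, ← RingHom.map_det]
        exact hvQ
      have hrank := card_le_rank_of_det_ne_zero _ _ _ hdet
      rw [rowsRank]
      calc min F.card (∑ i, n i - (d - 1)) = s := hs.symm
      _ = Fintype.card {a // a ∈ F'} := by rw [Fintype.card_coe, hF'card]
      _ ≤ _ := hrank
  choose M hM0 hM1 using helper
  refine ⟨(∏ F ∈ (Finset.univ : Finset (Finset (Fin m))), M F)
      * ∏ i : Fin d, MvPolynomial.X (Sum.inr ⟨i, ⟨0, hn i⟩⟩), ?_, ?_⟩
  · apply mul_ne_zero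
    · exact Finset.prod_ne_zero_iff.mpr fun F _ => hM0 F
    · exact Finset.prod_ne_zero_iff.mpr fun i _ => MvPolynomial.X_ne_zero _
  · intro Y p hval F _
    rw [map_mul] at hval
    obtain ⟨h1, h2⟩ := mul_ne_zero_iff.mp hval
    rw [map_prod] at h1 h2
    have hMF := Finset.prod_ne_zero_iff.mp h1 F (Finset.mem_univ F)
    have hp : ∀ i, p i ⟨0, hn i⟩ ≠ 0 := by
      intro i
      have := Finset.prod_ne_zero_iff.mp h2 i (Finset.mem_univ i)
      simpa using this
    apply le_antisymm
    · apply le_min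
      · rw [rowsRank]
        calc _ ≤ Fintype.card {a // a ∈ F} := Matrix.rank_le_card_height _
        _ = F.card := Fintype.card_coe F
      · rw [rowsRank]
        calc _ ≤ (Matrix.of fun (r : Fin m) (c : Σ i : Fin d, Fin (n i)) =>
              (∏ k ∈ Finset.univ.erase c.1, (Y k).mulVec (p k) r) * Y c.1 r c.2).rank :=
            rank_submatrix_le'' _ _ _
        _ ≤ ∑ i, n i - (d - 1) := rank_jac_le hd hn Y p hp
    · exact hM1 F Y p hMF
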